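/- The finite Rogers–Ramanujan identity: for every natural number n, ∑_{r=0}^{n} q^{r^2} / ((q)_r (q)_{n-r}) = ∑_{r=-n}^{n} (-1)^r q^{(5r^2 - r)/2} / ((q)_{n-r} (q)_{n+r}), as an identity of rational functions (or for q in a field with (q)_k ≠ 0 for all relevant k). -/

import Mathlib

open Finset
noncomputable section
abbrev RRK : Type := RatFunc ℚ
def rrq : RRK := RatFunc.X
def rrP (r : ℕ) : RRK := ∏ j ∈ range r, (1 - rrq ^ (j+1))

lemma rrq_ne_zero : rrq ≠ 0 := RatFunc.X_ne_zero

lemma one_sub_rrq_pow_ne_zero {m : ℕ} (hm : m ≠ 0) : (1 : RRK) - rrq ^ m ≠ 0 := by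
  have h1 : (1 : RRK) - rrq ^ m = algebraMap (Polynomial ℚ) RRK (1 - Polynomial.X ^ m) := by
    simp [rrq, RatFunc.algebraMap_X]
  rw [h1]
  apply RatFunc.algebraMap_ne_zero
  intro h
  have := congrArg (fun p => Polynomial.coeff p 0) h
  simp [Polynomial.coeff_X_pow, Ne.symm hm] at this

lemma rrP_ne_zero (r : ℕ) : rrP r ≠ 0 := by
  apply prod_ne_zero_iff.mpr
  intro j _
  exact one_sub_rrq_pow_ne_zero (Nat.succ_ne_zero j)

lemma rrP_succ (r : ℕ) : rrP (r+1) = rrP r * (1 - rrq^(r+1)) := prod_range_succ _ _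

def gb (m s : ℕ) : RRK := if s ≤ m then rrP m / (rrP s * rrP (m - s)) else 0

lemma gb_eq {m s : ℕ} (h : s ≤ m) : gb m s = rrP m / (rrP s * rrP (m - s)) := if_pos h
lemma gb_eq_zero {m s : ℕ} (h : m < s) : gb m s = 0 := if_neg (by omega)
lemma gb_zero (m : ℕ) : gb m 0 = 1 := by
  rw [gb_eq (Nat.zero_le m), Nat.sub_zero, show rrP 0 = 1 from prod_range_zero _, one_mul]
  exact div_self (rrP_ne_zero m)
lemma gb_self (m : ℕ) : gb m m = 1 := by
  rw [gb_eq le_rfl, Nat.sub_self, show rrP 0 = 1 from prod_range_zero _, mul_one]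
  exact div_self (rrP_ne_zero m)

lemma gb_symm {m s : ℕ} (h : s ≤ m) : gb m (m - s) = gb m s := by
  rw [gb_eq (Nat.sub_le m s), gb_eq h, Nat.sub_sub_self h, mul_comm]

lemma gb_pascal (m s : ℕ) : gb (m+1) (s+1) = gb m (s+1) + rrq^(m-s) * gb m s := by
  rcases lt_trichotomy s m with hlt | heq | hgt
  · obtain ⟨d, rfl⟩ : ∃ d, m = s + d + 1 := ⟨m - s - 1, by omega⟩
    rw [gb_eq (by omega), gb_eq (by omega), gb_eq (by omega)]
    rw [show s + d + 1 + 1 - (s+1) = d + 1 by omega, show s + d + 1 - (s+1) = d by omega,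
        show s + d + 1 - s = d + 1 by omega]
    rw [rrP_succ (s+d+1), rrP_succ d, rrP_succ s]
    have h1 := rrP_ne_zero s
    have h2 := rrP_ne_zero d
    have h3 := rrP_ne_zero (s+d+1)
    have h4 := one_sub_rrq_pow_ne_zero (by omega : s+1 ≠ 0)
    have h5 := one_sub_rrq_pow_ne_zero (by omega : d+1 ≠ 0)
    have h6 := one_sub_rrq_pow_ne_zero (by omega : s+d+1+1 ≠ 0)
    field_simp
    ring
  · subst heq
    rw [gb_self, gb_eq_zero (by omega), gb_self]
    simp
  · rw [gb_eq_zero (by omega), gb_eq_zero (by omega), gb_eq_zero (by omega)]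
    simp

def tri (j : ℕ) : ℕ := j*(j-1)/2

lemma tri_eq_sum (j : ℕ) : tri j = ∑ i ∈ range j, i := (Finset.sum_range_id j).symm

lemma tri_succ (j : ℕ) : tri (j+1) = tri j + j := by
  rw [tri_eq_sum, tri_eq_sum, Finset.sum_range_succ]

lemma qbinom (m : ℕ) (x : RRK) :
    ∑ j ∈ range (m+1), (-1 : RRK)^j * rrq^(tri j) * x^j * gb m j
      = ∏ i ∈ range m, (1 - x * rrq^i) := by
  induction m generalizing x with
  | zero => simp [gb_self, tri]
  | succ m ih =>
    have key : ∀ u ∈ range (m+1),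
        (-1:RRK)^(u+1) * rrq^(tri (u+1)) * x^(u+1) * gb (m+1) (u+1)
        = (-1:RRK)^(u+1) * rrq^(tri (u+1)) * x^(u+1) * gb m (u+1)
          + (-(x * rrq^m)) * ((-1:RRK)^u * rrq^(tri u) * x^u * gb m u) := by
      intro u hu
      rw [mem_range] at hu
      obtain ⟨d, rfl⟩ : ∃ d, m = u + d := ⟨m - u, by omega⟩
      rw [gb_pascal, tri_succ, show u + d - u = d by omega]
      ring
    calc ∑ j ∈ range (m+1+1), (-1:RRK)^j * rrq^(tri j) * x^j * gb (m+1) j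
        = (∑ u ∈ range (m+1), ((-1:RRK)^(u+1) * rrq^(tri (u+1)) * x^(u+1) * gb m (u+1)
            + (-(x * rrq^m)) * ((-1:RRK)^u * rrq^(tri u) * x^u * gb m u)))
          + (-1:RRK)^0 * rrq^(tri 0) * x^0 * gb (m+1) 0 := by
          rw [Finset.sum_range_succ']
          exact congrArg (· + _) (Finset.sum_congr rfl key)
      _ = ((∑ u ∈ range (m+1), (-1:RRK)^(u+1) * rrq^(tri (u+1)) * x^(u+1) * gb m (u+1))
            + (-1:RRK)^0 * rrq^(tri 0) * x^0 * gb m 0)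
          + (-(x * rrq^m)) * ∑ u ∈ range (m+1), (-1:RRK)^u * rrq^(tri u) * x^u * gb m u := by
          rw [Finset.sum_add_distrib, Finset.mul_sum, gb_zero, gb_zero]
          ring
      _ = (∑ j ∈ range (m+1+1), (-1:RRK)^j * rrq^(tri j) * x^j * gb m j)
          + (-(x * rrq^m)) * ∑ u ∈ range (m+1), (-1:RRK)^u * rrq^(tri u) * x^u * gb m u := by
          conv_rhs => rw [Finset.sum_range_succ']
      _ = (1 - x * rrq^m) * ∑ j ∈ range (m+1), (-1:RRK)^j * rrq^(tri j) * x^j * gb m j := by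
          rw [Finset.sum_range_succ _ (m+1), gb_eq_zero (Nat.lt_succ_self m), mul_zero, add_zero]
          ring
      _ = ∏ i ∈ range (m+1), (1 - x * rrq^i) := by
          rw [ih, Finset.prod_range_succ]; ring

lemma Tkey (m : ℕ) : ∀ t : ℕ,
    ∑ s ∈ range (m+1), rrq^(s*(s+t)) * gb m s / rrP (s+t) = 1 / rrP (m+t) := by
  induction m with
  | zero => intro t; simp [gb_self]
  | succ m ih =>
    intro t
    have key : ∀ u ∈ range (m+1),
        rrq^((u+1)*(u+1+t)) * gb (m+1) (u+1) / rrP (u+1+t)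
        = rrq^((u+1)*(u+1+t)) * gb m (u+1) / rrP (u+1+t)
          + rrq^(m+t+1) * (rrq^(u*(u+(t+1))) * gb m u / rrP (u+(t+1))) := by
      intro u hu
      rw [mem_range] at hu
      obtain ⟨d, rfl⟩ : ∃ d, m = u + d := ⟨m - u, by omega⟩
      have h1 : u + (t+1) = u+1+t := by ring
      rw [h1, gb_pascal, show u + d - u = d by omega, mul_add, add_div]
      congr 1
      have hexp : rrq^((u+1)*(u+1+t)) * rrq^d = rrq^(u+d+t+1) * rrq^(u*(u+1+t)) := by
        rw [← pow_add, ← pow_add]; congr 1; ring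
      calc rrq^((u+1)*(u+1+t)) * (rrq^d * gb (u+d) u) / rrP (u+1+t)
          = (rrq^((u+1)*(u+1+t)) * rrq^d) * gb (u+d) u / rrP (u+1+t) := by ring
        _ = (rrq^(u+d+t+1) * rrq^(u*(u+1+t))) * gb (u+d) u / rrP (u+1+t) := by rw [hexp]
        _ = rrq^(u+d+t+1) * (rrq^(u*(u+1+t)) * gb (u+d) u / rrP (u+1+t)) := by ring
    calc ∑ s ∈ range (m+1+1), rrq^(s*(s+t)) * gb (m+1) s / rrP (s+t)
        = (∑ u ∈ range (m+1), (rrq^((u+1)*(u+1+t)) * gb m (u+1) / rrP (u+1+t)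
            + rrq^(m+t+1) * (rrq^(u*(u+(t+1))) * gb m u / rrP (u+(t+1)))))
          + rrq^(0*(0+t)) * gb (m+1) 0 / rrP (0+t) := by
          rw [Finset.sum_range_succ']
          exact congrArg (· + _) (Finset.sum_congr rfl key)
      _ = ((∑ u ∈ range (m+1), rrq^((u+1)*(u+1+t)) * gb m (u+1) / rrP (u+1+t))
            + rrq^(0*(0+t)) * gb m 0 / rrP (0+t))
          + rrq^(m+t+1) * ∑ u ∈ range (m+1), rrq^(u*(u+(t+1))) * gb m u / rrP (u+(t+1)) := by
          rw [Finset.sum_add_distrib, Finset.mul_sum, gb_zero, gb_zero]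
          ring
      _ = (∑ s ∈ range (m+1+1), rrq^(s*(s+t)) * gb m s / rrP (s+t))
          + rrq^(m+t+1) * ∑ u ∈ range (m+1), rrq^(u*(u+(t+1))) * gb m u / rrP (u+(t+1)) := by
          conv_rhs => rw [Finset.sum_range_succ']
      _ = 1 / rrP (m+t) + rrq^(m+t+1) * (1 / rrP (m+(t+1))) := by
          rw [Finset.sum_range_succ _ (m+1), gb_eq_zero (Nat.lt_succ_self m), mul_zero, zero_div,
            add_zero, ih t, ih (t+1)]
      _ = 1 / rrP (m+1+t) := by
          have h1 : m + (t+1) = m+t+1 := by ring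
          have h2 : m + 1 + t = m+t+1 := by ring
          rw [h1, h2, rrP_succ (m+t)]
          have := rrP_ne_zero (m+t)
          have := one_sub_rrq_pow_ne_zero (show m+t+1 ≠ 0 by omega)
          field_simp
          ring

lemma tri_def (j : ℕ) : tri j = j*(j-1)/2 := rfl

lemma tri_two (d : ℕ) : 2 * tri d = d*(d-1) := by
  rw [tri_eq_sum, mul_comm]
  exact Finset.sum_range_id_mul_two d

lemma tri_add (a b : ℕ) : tri (a+b) = tri a + tri b + a*b := by
  induction b with
  | zero => simp [tri_def]
  | succ e ihb =>
    rw [show a+(e+1) = (a+e)+1 by omega, tri_succ, ihb, tri_succ]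
    have h : a*(e+1) = a*e + a := by ring
    omega

lemma rrP_zero : rrP 0 = 1 := prod_range_zero _

lemma rr_inner_sum {j n : ℕ} (hj : j ≤ n) :
    ∑ r ∈ Icc j n, rrq^(r^2) / (rrP (n-r) * rrP (r-j) * rrP (r+j))
      = rrq^(j^2) / (rrP (n-j) * rrP (n+j)) := by
  obtain ⟨m, rfl⟩ : ∃ m, n = j + m := ⟨n - j, by omega⟩
  rw [← Finset.Ico_add_one_right_eq_Icc, Finset.sum_Ico_eq_sum_range, show j + m + 1 - j = m + 1 by omega]
  have congrstep : ∀ s ∈ range (m+1),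
      rrq^((j+s)^2) / (rrP (j+m-(j+s)) * rrP (j+s-j) * rrP (j+s+j))
      = (rrq^(j^2) / rrP m) * (rrq^(s*(s+2*j)) * gb m s / rrP (s+2*j)) := by
    intro s hs; rw [mem_range] at hs
    rw [show j+m-(j+s) = m - s by omega, show j+s-j = s by omega, show j+s+j = s+2*j by omega,
        gb_eq (show s ≤ m by omega)]
    have hpow : rrq^((j+s)^2) = rrq^(j^2) * rrq^(s*(s+2*j)) := by
      rw [← pow_add]; congr 1; ring
    rw [hpow]
    have h1 := rrP_ne_zero (m-s); have h2 := rrP_ne_zero s; have h3 := rrP_ne_zero (s+2*j)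
    have h4 := rrP_ne_zero m
    field_simp
  rw [Finset.sum_congr rfl congrstep, ← Finset.mul_sum, Tkey m (2*j),
    show j+m-j = m by omega, show j+m+j = m+2*j by omega, div_mul_div_comm, mul_one]

lemma sum_triangle (n : ℕ) (f : ℕ → ℕ → RRK) :
    ∑ r ∈ range (n+1), ∑ j ∈ range (r+1), f r j
      = ∑ j ∈ range (n+1), ∑ r ∈ Icc j n, f r j := by
  induction n with
  | zero => simp
  | succ n ih =>
    have h1 : ∀ j ∈ range (n+1), ∑ r ∈ Icc j (n+1), f r j
        = (∑ r ∈ Icc j n, f r j) + f (n+1) j := by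
      intro j hj; rw [mem_range] at hj
      exact Finset.sum_Icc_succ_top (by omega) _
    rw [Finset.sum_range_succ (fun r => ∑ j ∈ range (r+1), f r j) (n+1),
      Finset.sum_range_succ (fun j => ∑ r ∈ Icc j (n+1), f r j) (n+1),
      Finset.sum_congr rfl h1, Finset.sum_add_distrib, ← ih,
      Finset.Icc_self, Finset.sum_singleton,
      Finset.sum_range_succ (fun j => f (n+1) j) (n+1)]
    ring

lemma bailey_step (α : ℕ → RRK) (n : ℕ) :
    ∑ r ∈ range (n+1), rrq^(r^2) * (∑ j ∈ range (r+1), α j / (rrP (r-j) * rrP (r+j))) / rrP (n-r)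
      = ∑ j ∈ range (n+1), rrq^(j^2) * α j / (rrP (n-j) * rrP (n+j)) := by
  have lhs_eq : ∀ r ∈ range (n+1),
      rrq^(r^2) * (∑ j ∈ range (r+1), α j / (rrP (r-j) * rrP (r+j))) / rrP (n-r)
      = ∑ j ∈ range (r+1), α j * (rrq^(r^2) / (rrP (n-r) * rrP (r-j) * rrP (r+j))) := by
    intro r _
    rw [Finset.mul_sum, Finset.sum_div]
    exact Finset.sum_congr rfl fun j _ => by ring
  rw [Finset.sum_congr rfl lhs_eq,
    sum_triangle n (fun r j => α j * (rrq^(r^2) / (rrP (n-r) * rrP (r-j) * rrP (r+j))))]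
  refine Finset.sum_congr rfl fun j hj => ?_
  rw [mem_range] at hj
  rw [← Finset.mul_sum, rr_inner_sum (show j ≤ n by omega)]
  ring

lemma tri_zero : tri 0 = 0 := by rw [tri_def]

lemma exp1 {n j : ℕ} (hj : j ≤ n) : tri n + tri (n-j) = tri j + (n-1)*(n-j) := by
  obtain ⟨d, rfl⟩ : ∃ d, n = j + d := ⟨n - j, by omega⟩
  rw [show j + d - j = d by omega, tri_add]
  cases d with
  | zero => simp [tri_zero]
  | succ e =>
    have h2 : 2 * tri (e+1) = (e+1) * e := by rw [tri_two]; simp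
    rw [show j + (e+1) - 1 = j + e by omega]
    zify at h2 ⊢
    linear_combination h2

lemma exp2 {n i : ℕ} (hn : 1 ≤ n) : tri n + tri (n+1+i) = tri (i+2) + (n-1)*(n+1+i) := by
  obtain ⟨e, rfl⟩ : ∃ e, n = e + 1 := ⟨n-1, by omega⟩
  have h1 : tri (e+1+1+i) = tri (e+1) + tri (i+1) + (e+1)*(i+1) := by
    rw [show e+1+1+i = (e+1)+(i+1) by omega]; exact tri_add (e+1) (i+1)
  have h3 : tri (i+2) = tri (i+1) + (i+1) := tri_succ (i+1)
  have h2 : 2 * tri (e+1) = (e+1) * e := by rw [tri_two]; simp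
  rw [h1, h3, show e+1-1 = e by omega]
  zify at h2 ⊢
  linear_combination h2

lemma sign1 {n j : ℕ} (hj : j ≤ n) : (-1:RRK)^n * (-1)^(n-j) = (-1)^j := by
  rw [← pow_add, show n + (n-j) = 2*(n-j) + j by omega, pow_add, pow_mul]
  norm_num

lemma sign2 (n i : ℕ) : (-1:RRK)^n * (-1)^(n+1+i) = (-1)^(i+1) := by
  rw [← pow_add, show n + (n+1+i) = 2*n + (i+1) by omega, pow_add, pow_mul]
  norm_num

def ah (j : ℕ) : RRK := if j = 0 then 1 else (-1)^j * rrq^(tri j) * (1 + rrq^j)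

lemma unitpair (n : ℕ) :
    ∑ j ∈ range (n+1), ah j / (rrP (n-j) * rrP (n+j)) = if n = 0 then 1 else 0 := by
  rcases Nat.eq_zero_or_pos n with rfl | hn
  · simp [ah, rrP_zero]
  rw [if_neg (by omega)]
  set x : RRK := (rrq^(n-1))⁻¹ with hxdef
  have hS : ∑ k ∈ range (2*n+1), (-1:RRK)^k * rrq^(tri k) * x^k * gb (2*n) k = 0 := by
    rw [qbinom (2*n) x]
    apply Finset.prod_eq_zero (show n-1 ∈ range (2*n) by rw [mem_range]; omega)
    rw [hxdef, inv_mul_cancel₀ (pow_ne_zero _ rrq_ne_zero), sub_self]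
  have hx : ∀ k : ℕ, x^k = (rrq^((n-1)*k))⁻¹ := by
    intro k; rw [hxdef, inv_pow, ← pow_mul]
  set C : RRK := (-1:RRK)^n * rrq^(tri n) with hCdef
  have claim1 : ∀ j ∈ range (n+1),
      C * ((-1:RRK)^(n+1-1-j) * rrq^(tri (n+1-1-j)) * x^(n+1-1-j) * gb (2*n) (n+1-1-j))
      = (-1:RRK)^j * rrq^(tri j) * gb (2*n) (n-j) := by
    intro j hj; rw [mem_range] at hj
    rw [show n+1-1-j = n-j by omega, hx (n-j), hCdef]
    have hne : rrq^((n-1)*(n-j)) ≠ 0 := pow_ne_zero _ rrq_ne_zero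
    have hpow : rrq^(tri n) * rrq^(tri (n-j)) = rrq^(tri j) * rrq^((n-1)*(n-j)) := by
      rw [← pow_add, ← pow_add]; exact congrArg _ (exp1 (by omega))
    have hsg : (-1:RRK)^n * (-1)^(n-j) = (-1)^j := sign1 (by omega)
    calc (-1:RRK)^n * rrq^(tri n)
          * ((-1:RRK)^(n-j) * rrq^(tri (n-j)) * (rrq^((n-1)*(n-j)))⁻¹ * gb (2*n) (n-j))
        = ((-1:RRK)^n * (-1)^(n-j))
          * ((rrq^(tri n) * rrq^(tri (n-j))) * ((rrq^((n-1)*(n-j)))⁻¹ * gb (2*n) (n-j))) := by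
          ring
      _ = (-1:RRK)^j
          * ((rrq^(tri j) * rrq^((n-1)*(n-j))) * ((rrq^((n-1)*(n-j)))⁻¹ * gb (2*n) (n-j))) := by
          rw [hsg, hpow]
      _ = (-1:RRK)^j * rrq^(tri j) * gb (2*n) (n-j) := by
          field_simp
  have claim2 : ∀ i ∈ range n,
      C * ((-1:RRK)^(n+1+i) * rrq^(tri (n+1+i)) * x^(n+1+i) * gb (2*n) (n+1+i))
      = (-1:RRK)^(i+1) * rrq^(tri (i+2)) * gb (2*n) (n-(i+1)) := by
    intro i hi; rw [mem_range] at hi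
    have hgb : gb (2*n) (n+1+i) = gb (2*n) (n-(i+1)) := by
      have h := gb_symm (show n+1+i ≤ 2*n by omega)
      rw [show 2*n - (n+1+i) = n - (i+1) by omega] at h
      exact h.symm
    rw [hx (n+1+i), hCdef, hgb]
    have hne : rrq^((n-1)*(n+1+i)) ≠ 0 := pow_ne_zero _ rrq_ne_zero
    have hpow : rrq^(tri n) * rrq^(tri (n+1+i)) = rrq^(tri (i+2)) * rrq^((n-1)*(n+1+i)) := by
      rw [← pow_add, ← pow_add]; exact congrArg _ (exp2 (by omega))
    have hsg : (-1:RRK)^n * (-1)^(n+1+i) = (-1)^(i+1) := sign2 n i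
    calc (-1:RRK)^n * rrq^(tri n)
          * ((-1:RRK)^(n+1+i) * rrq^(tri (n+1+i)) * (rrq^((n-1)*(n+1+i)))⁻¹ * gb (2*n) (n-(i+1)))
        = ((-1:RRK)^n * (-1)^(n+1+i))
          * ((rrq^(tri n) * rrq^(tri (n+1+i))) * ((rrq^((n-1)*(n+1+i)))⁻¹ * gb (2*n) (n-(i+1)))) := by
          ring
      _ = (-1:RRK)^(i+1)
          * ((rrq^(tri (i+2)) * rrq^((n-1)*(n+1+i))) * ((rrq^((n-1)*(n+1+i)))⁻¹ * gb (2*n) (n-(i+1)))) := by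
          rw [hsg, hpow]
      _ = (-1:RRK)^(i+1) * rrq^(tri (i+2)) * gb (2*n) (n-(i+1)) := by
          field_simp
  have key2 : (∑ j ∈ range (n+1), (-1:RRK)^j * rrq^(tri j) * gb (2*n) (n-j))
      + (∑ i ∈ range n, (-1:RRK)^(i+1) * rrq^(tri (i+2)) * gb (2*n) (n-(i+1))) = 0 := by
    have e0 : ∑ k ∈ range (2*n+1), C * ((-1:RRK)^k * rrq^(tri k) * x^k * gb (2*n) k) = 0 := by
      rw [← Finset.mul_sum, hS, mul_zero]
    rw [show 2*n+1 = (n+1)+n by omega] at e0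
    rw [Finset.sum_range_add (fun k => C * ((-1:RRK)^k * rrq^(tri k) * x^k * gb (2*n) k)) (n+1) n]
      at e0
    rw [← Finset.sum_range_reflect
      (fun k => C * ((-1:RRK)^k * rrq^(tri k) * x^k * gb (2*n) k)) (n+1)] at e0
    rw [Finset.sum_congr rfl claim1, Finset.sum_congr rfl claim2] at e0
    exact e0
  have assemble : ∑ j ∈ range (n+1), ah j * gb (2*n) (n-j)
      = (∑ j ∈ range (n+1), (-1:RRK)^j * rrq^(tri j) * gb (2*n) (n-j))
        + ∑ i ∈ range n, (-1:RRK)^(i+1) * rrq^(tri (i+2)) * gb (2*n) (n-(i+1)) := by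
    rw [Finset.sum_range_succ' (fun j => ah j * gb (2*n) (n-j)) n,
        Finset.sum_range_succ' (fun j => (-1:RRK)^j * rrq^(tri j) * gb (2*n) (n-j)) n]
    have hterm : ∀ i ∈ range n, ah (i+1) * gb (2*n) (n-(i+1))
        = (-1:RRK)^(i+1) * rrq^(tri (i+1)) * gb (2*n) (n-(i+1))
          + (-1:RRK)^(i+1) * rrq^(tri (i+2)) * gb (2*n) (n-(i+1)) := by
      intro i _
      rw [show ah (i+1) = (-1:RRK)^(i+1) * rrq^(tri (i+1)) * (1 + rrq^(i+1)) from
        if_neg (by omega)]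
      rw [show tri (i+2) = tri (i+1) + (i+1) from tri_succ (i+1), pow_add]
      ring
    rw [Finset.sum_congr rfl hterm, Finset.sum_add_distrib]
    rw [show ah 0 = 1 from if_pos rfl]
    rw [tri_zero]
    ring
  calc ∑ j ∈ range (n+1), ah j / (rrP (n-j) * rrP (n+j))
      = (∑ j ∈ range (n+1), ah j * gb (2*n) (n-j)) / rrP (2*n) := by
        rw [Finset.sum_div]
        refine Finset.sum_congr rfl fun j hj => ?_
        rw [mem_range] at hj
        rw [gb_eq (show n-j ≤ 2*n by omega), show 2*n - (n-j) = n+j by omega]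
        have h1 := rrP_ne_zero (n-j); have h2 := rrP_ne_zero (n+j)
        have h3 := rrP_ne_zero (2*n)
        field_simp
    _ = 0 := by rw [assemble, key2, zero_div]


lemma ah_zero : ah 0 = 1 := if_pos rfl

lemma ah_pos (j : ℕ) (h : j ≠ 0) : ah j = (-1)^j * rrq^(tri j) * (1 + rrq^j) := if_neg h

lemma identity1 (n : ℕ) :
    (1:RRK) / rrP n = ∑ j ∈ range (n+1), rrq^(j^2) * ah j / (rrP (n-j) * rrP (n+j)) := by
  have h := bailey_step ah n
  rw [Finset.sum_congr rfl (fun r (hr : r ∈ range (n+1)) => by rw [unitpair r])] at h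
  rw [← h]
  rw [Finset.sum_eq_single_of_mem 0 (Finset.mem_range.mpr (by omega))]
  · simp
  · intro b _ hb
    simp [hb]

lemma main_eq (n : ℕ) :
    ∑ r ∈ range (n+1), rrq^(r^2) / (rrP r * rrP (n-r))
      = ∑ j ∈ range (n+1), rrq^(j^2) * (rrq^(j^2) * ah j) / (rrP (n-j) * rrP (n+j)) := by
  have h := bailey_step (fun j => rrq^(j^2) * ah j) n
  rw [← h]
  refine Finset.sum_congr rfl fun r _ => ?_
  rw [← identity1 r]
  ring

lemma sum_Icc_int (n : ℕ) (h : ℤ → RRK) :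
    ∑ r ∈ Icc (-(n:ℤ)) (n:ℤ), h r
      = ∑ j ∈ range (n+1), h j + ∑ i ∈ range n, h (-((i+1 : ℕ) : ℤ)) := by
  induction n with
  | zero => simp
  | succ n ih =>
    have hc : ((n+1 : ℕ) : ℤ) = (n:ℤ)+1 := by push_cast; ring
    rw [hc]
    have e1 : Icc (-((n:ℤ)+1)) ((n:ℤ)+1)
        = insert (-((n:ℤ)+1)) (insert ((n:ℤ)+1) (Icc (-(n:ℤ)) (n:ℤ))) := by
      ext r
      simp only [mem_Icc, mem_insert]
      omega
    rw [e1, Finset.sum_insert (by simp only [mem_insert, mem_Icc]; omega),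
        Finset.sum_insert (by simp only [mem_Icc]; omega), ih,
        Finset.sum_range_succ (fun j => h j) (n+1),
        Finset.sum_range_succ (fun i => h (-((i+1 : ℕ) : ℤ))) n]
    push_cast
    ring

lemma tri_sq (j : ℕ) : 2 * tri j + j = j * j := by
  cases j with
  | zero => simp [tri_zero]
  | succ v =>
    have h := tri_two (v+1)
    rw [Nat.add_sub_cancel] at h
    zify at h ⊢
    linear_combination h

lemma hexpA (j : ℕ) : (5*(j:ℤ)^2 - (j:ℤ))/2 = ((2*j^2 + tri j : ℕ) : ℤ) := by
  have h2 := tri_sq j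
  have hz : (2:ℤ) * (tri j : ℤ) + (j:ℤ) = (j:ℤ)*(j:ℤ) := by exact_mod_cast h2
  have hnum : 5*(j:ℤ)^2 - (j:ℤ) = (((2*j^2 + tri j : ℕ) : ℤ))*2 := by
    push_cast
    linear_combination -hz
  rw [hnum, Int.mul_ediv_cancel _ two_ne_zero]

lemma hexpB (j : ℕ) : (5*(-(j:ℤ))^2 - (-(j:ℤ)))/2 = ((2*j^2 + tri j + j : ℕ) : ℤ) := by
  have h2 := tri_sq j
  have hz : (2:ℤ) * (tri j : ℤ) + (j:ℤ) = (j:ℤ)*(j:ℤ) := by exact_mod_cast h2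
  have hnum : 5*(-(j:ℤ))^2 - (-(j:ℤ)) = (((2*j^2 + tri j + j : ℕ) : ℤ))*2 := by
    push_cast
    linear_combination -hz
  rw [hnum, Int.mul_ediv_cancel _ two_ne_zero]

lemma term_pos (n j : ℕ) :
    (-1:RRK)^(j:ℤ) * rrq^((5*(j:ℤ)^2 - (j:ℤ))/2)
      / (rrP ((n:ℤ) - (j:ℤ)).toNat * rrP ((n:ℤ) + (j:ℤ)).toNat)
    = (-1:RRK)^j * rrq^(2*j^2 + tri j) / (rrP (n-j) * rrP (n+j)) := by
  rw [hexpA j, zpow_natCast, zpow_natCast, show ((n:ℤ)-(j:ℤ)).toNat = n - j by omega,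
     show ((n:ℤ)+(j:ℤ)).toNat = n + j by omega]

lemma term_neg (n j : ℕ) :
    (-1:RRK)^(-(j:ℤ)) * rrq^((5*(-(j:ℤ))^2 - (-(j:ℤ)))/2)
      / (rrP ((n:ℤ) - (-(j:ℤ))).toNat * rrP ((n:ℤ) + (-(j:ℤ))).toNat)
    = (-1:RRK)^j * rrq^(2*j^2 + tri j + j) / (rrP (n+j) * rrP (n-j)) := by
  rw [hexpB j, zpow_neg, zpow_natCast, zpow_natCast,
     show ((n:ℤ)-(-(j:ℤ))).toNat = n + j by omega,
     show ((n:ℤ)+(-(j:ℤ))).toNat = n - j by omega]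
  congr 1
  rw [← inv_pow, inv_neg_one]

theorem finite_rogers_ramanujan (n : ℕ) :
    let q : RatFunc ℚ := RatFunc.X
    let P : ℕ → RatFunc ℚ := fun r => ∏ j ∈ Finset.range r, (1 - q^(j+1))
    ∑ r ∈ Finset.range (n+1), q^(r^2) / (P r * P (n - r)) =
      ∑ r ∈ Finset.Icc (-(n:ℤ)) (n:ℤ),
        (-1 : RatFunc ℚ)^r * q^((5*r^2 - r)/2) /
          (P ((n:ℤ) - r).toNat * P ((n:ℤ) + r).toNat) := by
  intro q P
  show ∑ r ∈ range (n+1), rrq^(r^2) / (rrP r * rrP (n - r)) =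
      ∑ r ∈ Icc (-(n:ℤ)) (n:ℤ),
        (-1 : RRK)^r * rrq^((5*r^2 - r)/2) /
          (rrP ((n:ℤ) - r).toNat * rrP ((n:ℤ) + r).toNat)
  rw [main_eq n,
    sum_Icc_int n (fun r => (-1 : RRK)^r * rrq^((5*r^2 - r)/2) /
      (rrP ((n:ℤ) - r).toNat * rrP ((n:ℤ) + r).toNat))]
  rw [Finset.sum_congr rfl (fun j _ => term_pos n j)]
  rw [Finset.sum_congr rfl (fun i (_ : i ∈ range n) => term_neg n (i+1))]
  rw [Finset.sum_range_succ'
      (fun j => rrq^(j^2) * (rrq^(j^2) * ah j) / (rrP (n-j) * rrP (n+j))) n,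
    Finset.sum_range_succ'
      (fun j => (-1:RRK)^j * rrq^(2*j^2 + tri j) / (rrP (n-j) * rrP (n+j))) n]
  have hterm : ∀ i ∈ range n,
      rrq^((i+1)^2) * (rrq^((i+1)^2) * ah (i+1)) / (rrP (n-(i+1)) * rrP (n+(i+1)))
      = (-1:RRK)^(i+1) * rrq^(2*(i+1)^2 + tri (i+1)) / (rrP (n-(i+1)) * rrP (n+(i+1)))
        + (-1:RRK)^(i+1) * rrq^(2*(i+1)^2 + tri (i+1) + (i+1)) / (rrP (n+(i+1)) * rrP (n-(i+1))) := by
    intro i _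
    rw [ah_pos (i+1) (by omega)]
    rw [show 2*(i+1)^2 + tri (i+1) + (i+1) = (2*(i+1)^2 + tri (i+1)) + (i+1) from rfl, pow_add,
      show (2:ℕ)*(i+1)^2 + tri (i+1) = (i+1)^2 + ((i+1)^2 + tri (i+1)) by ring, pow_add, pow_add]
    ring
  rw [Finset.sum_congr rfl hterm, Finset.sum_add_distrib]
  rw [ah_zero, tri_zero]
  norm_num
  ring
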